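/- arXiv:0910.5063 — 2 statements merged into one kernel-verified Lean document; each statement's English description precedes it below -/
import Mathlib

section
/- If d and p are coprime rational integers with gcd(d, 3) = 1 viewed inside ℤ[ω], then the cubic residue symbol (p/d)₃ = 1. -/
open NumberField

/-- The field `ℚ(ω)` with `ω = e^{2πi/3}`. -/
noncomputable abbrev K3 : Type := CyclotomicField 3 ℚ

noncomputable instance : NumberField K3 :=
  @IsCyclotomicExtension.numberField {3} ℚ K3 _ _ _ _ _ (CyclotomicField.isCyclotomicExtension 3 ℚ)

/-- The Eisenstein integers `ℤ[ω]`, realized as the ring of integers of `ℚ(ω)`. -/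
noncomputable abbrev R3 : Type := 𝓞 K3

/-- The norm `N(n)` of an Eisenstein integer. -/
noncomputable def eNorm (n : R3) : ℕ := Ideal.absNorm (Ideal.span {n})

/-- The norm is invariant under ring automorphisms. -/
lemma eNorm_map_aut (σ : R3 ≃ₐ[ℤ] R3) (x : R3) : eNorm (σ x) = eNorm x := by
  have h : Ideal.span {σ x} = Ideal.map (σ.toRingEquiv : R3 →+* R3) (Ideal.span {x}) := by
    rw [Ideal.map_span, Set.image_singleton]
    rfl
  rw [eNorm, eNorm, Ideal.absNorm_apply, Ideal.absNorm_apply, Submodule.cardQuot_apply,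
    Submodule.cardQuot_apply]
  exact (Nat.card_congr (Ideal.quotientEquiv _ _ σ.toRingEquiv h).toEquiv).symm

/-- There is an automorphism of `ℤ[ω]` sending `ω` to `ω²`. -/
lemma exists_sigma (ω : R3) (hω : ω ^ 2 + ω + 1 = 0) :
    ∃ σ : R3 ≃ₐ[ℤ] R3, σ ω = ω ^ 2 := by
  haveI : IsCyclotomicExtension {3} ℚ K3 := CyclotomicField.isCyclotomicExtension 3 ℚ
  have h3irr : Irreducible (Polynomial.cyclotomic 3 ℚ) :=
    Polynomial.cyclotomic.irreducible_rat (by norm_num)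
  have hζ : IsPrimitiveRoot (IsCyclotomicExtension.zeta 3 ℚ K3) ((3 : ℕ+) : ℕ) :=
    IsCyclotomicExtension.zeta_spec 3 ℚ K3
  set ζ := IsCyclotomicExtension.zeta 3 ℚ K3 with hzdef
  have hζ2 : IsPrimitiveRoot (ζ ^ 2) (3 : ℕ) := hζ.pow_of_coprime 2 (by decide)
  set σK : K3 ≃ₐ[ℚ] K3 := IsCyclotomicExtension.fromZetaAut hζ2 h3irr with hsdef
  have hσζ : σK ζ = ζ ^ 2 := IsCyclotomicExtension.fromZetaAut_spec hζ2 h3irr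
  refine ⟨galRestrict ℤ ℚ K3 R3 σK, ?_⟩
  have hinj : Function.Injective (algebraMap R3 K3) := IsFractionRing.injective R3 K3
  apply hinj
  rw [algebraMap_galRestrict_apply, map_pow]
  set w := algebraMap R3 K3 ω with hw
  have hw2 : w ^ 2 + w + 1 = 0 := by
    have h := congrArg (algebraMap R3 K3) hω
    rw [map_add, map_add, map_pow, map_one, map_zero] at h
    exact h
  have hζ3 : ζ ^ 3 = 1 := by simpa using hζ.pow_eq_one
  have hζ1 : ζ ≠ 1 := hζ.ne_one (by norm_num)
  have hζq : ζ ^ 2 + ζ + 1 = 0 := by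
    have h : (ζ - 1) * (ζ ^ 2 + ζ + 1) = 0 := by linear_combination hζ3
    rcases mul_eq_zero.1 h with h' | h'
    · exact absurd (sub_eq_zero.1 h') hζ1
    · exact h'
  have hfac : (w - ζ) * (w - ζ ^ 2) = 0 := by
    linear_combination hw2 - w * hζq + hζ3
  have hζ4 : ζ ^ 4 = ζ := by linear_combination ζ * hζ3
  rcases mul_eq_zero.1 hfac with h' | h'
  · have hwζ : w = ζ := sub_eq_zero.1 h'
    rw [hwζ, hσζ]
  · have hwζ : w = ζ ^ 2 := sub_eq_zero.1 h'
    rw [hwζ, map_pow, hσζ]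

/-- If `d` and `p` are coprime rational integers with `gcd(d,3) = 1`, then the cubic residue
symbol `(p/d)₃ = 1` in `ℤ[ω]`.  Here `J a n` denotes the cubic residue symbol `(a/n)₃`,
characterized as in the classical definition: completely multiplicative in the denominator,
with values in `{1, ω, ω²}` at primes `π ∤ a` with `N(π) ≠ 3` where
`J a π ≡ a^{(N(π)-1)/3} mod π`, vanishing at primes dividing `a`, and `J a 1 = 1` for units. -/
theorem stmt12 (J : R3 → R3 → R3) (ω : R3) (hω : ω ^ 2 + ω + 1 = 0)
    (hmul : ∀ a n m : R3, J a (n * m) = J a n * J a m)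
    (hone : ∀ a : R3, J a 1 = 1)
    (hunit : ∀ (a : R3) (u : R3), IsUnit u → J a u = 1)
    (hval : ∀ a π : R3, Prime π → eNorm π ≠ 3 → ¬ π ∣ a →
      J a π ∈ ({1, ω, ω ^ 2} : Set R3))
    (hcong : ∀ a π : R3, Prime π → eNorm π ≠ 3 → ¬ π ∣ a →
      π ∣ a ^ ((eNorm π - 1) / 3) - J a π)
    (hzero : ∀ a π : R3, Prime π → π ∣ a → J a π = 0)
    (d p : ℤ) (hco : IsCoprime d p) (h3 : IsCoprime d 3) :
    J (p : R3) (d : R3) = 1 := by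
  classical
  haveI : IsCyclotomicExtension {3} ℚ K3 := CyclotomicField.isCyclotomicExtension 3 ℚ
  haveI : IsPrincipalIdealRing R3 := IsCyclotomicExtension.Rat.three_pid K3
  obtain ⟨σ, hσω⟩ := exists_sigma ω hω
  have hd0 : d ≠ 0 := by
    rintro rfl
    have h31 : ¬ IsUnit (3 : ℤ) := by
      rw [Int.isUnit_iff]
      norm_num
    exact h31 (isCoprime_zero_left.mp h3)
  have hco' : IsCoprime (d : R3) (p : R3) := hco.map (Int.castRingHom R3)
  have h3' : IsCoprime (d : R3) (3 : R3) := by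
    have h := h3.map (Int.castRingHom R3)
    have h33 : ((Int.castRingHom R3) (3 : ℤ)) = (3 : R3) := map_ofNat _ 3
    rwa [h33] at h
  have hω3 : ω ^ 3 = 1 := by linear_combination (ω - 1) * hω
  have hω4 : ω ^ 4 = ω := by linear_combination ω * hω3
  -- two distinct values among {1, ω, ω²} differ by a divisor of 3
  have hdiff : ∀ x ∈ ({1, ω, ω ^ 2} : Set R3), ∀ y ∈ ({1, ω, ω ^ 2} : Set R3),
      ∀ π : R3, ¬ π ∣ (3 : R3) → π ∣ x - y → x = y := by
    intro x hx y hy π hπ3 hdvd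
    simp only [Set.mem_insert_iff, Set.mem_singleton_iff] at hx hy
    rcases hx with h1 | h1 | h1 <;> rcases hy with h2 | h2 | h2
    · rw [h1, h2]
    · exfalso; rw [h1, h2] at hdvd
      exact hπ3 (hdvd.trans ⟨1 - ω ^ 2, by linear_combination hω - hω3⟩)
    · exfalso; rw [h1, h2] at hdvd
      exact hπ3 (hdvd.trans ⟨1 - ω, by linear_combination hω - hω3⟩)
    · exfalso; rw [h1, h2] at hdvd
      exact hπ3 (hdvd.trans ⟨ω ^ 2 - 1, by linear_combination hω - hω3⟩)
    · rw [h1, h2]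
    · exfalso; rw [h1, h2] at hdvd
      exact hπ3 (hdvd.trans ⟨ω ^ 2 - ω, by linear_combination hω + (ω - 2) * hω3⟩)
    · exfalso; rw [h1, h2] at hdvd
      exact hπ3 (hdvd.trans ⟨ω - 1, by linear_combination hω - hω3⟩)
    · exfalso; rw [h1, h2] at hdvd
      exact hπ3 (hdvd.trans ⟨ω - ω ^ 2, by linear_combination hω + (ω - 2) * hω3⟩)
    · rw [h1, h2]
  -- key facts at a prime dividing d
  have hπfacts : ∀ π : R3, Prime π → π ∣ (d : R3) →
      J (p : R3) π * J (p : R3) (σ π) = 1 ∧ (J (p : R3) π) ^ 3 = 1 := by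
    intro π hπ hπd
    have hπ3 : ¬ π ∣ (3 : R3) := fun h => hπ.not_unit (h3'.isUnit_of_dvd' hπd h)
    have hπp : ¬ π ∣ (p : R3) := fun h => hπ.not_unit (hco'.isUnit_of_dvd' hπd h)
    have hNne : ∀ ρ : R3, ¬ ρ ∣ (3 : R3) → eNorm ρ ≠ 3 := by
      intro ρ hρ3 hN
      apply hρ3
      have h := Ideal.absNorm_mem (Ideal.span {ρ})
      rw [show Ideal.absNorm (Ideal.span {ρ}) = eNorm ρ from rfl, hN] at h
      have h' := Ideal.mem_span_singleton.mp h
      exact_mod_cast h'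
    have hNπ : eNorm π ≠ 3 := hNne π hπ3
    have hσπ : Prime (σ π) := (MulEquiv.prime_iff σ.toMulEquiv).mpr hπ
    have hσπd : σ π ∣ (d : R3) := by
      have h := map_dvd σ hπd
      rwa [map_intCast] at h
    have hσπ3 : ¬ σ π ∣ (3 : R3) := fun h => hσπ.not_unit (h3'.isUnit_of_dvd' hσπd h)
    have hσπp : ¬ σ π ∣ (p : R3) := fun h => hσπ.not_unit (hco'.isUnit_of_dvd' hσπd h)
    have hNσ : eNorm (σ π) = eNorm π := eNorm_map_aut σ π
    have hNσπ : eNorm (σ π) ≠ 3 := by rw [hNσ]; exact hNπ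
    have hv1 := hval (p : R3) π hπ hNπ hπp
    have hv2 := hval (p : R3) (σ π) hσπ hNσπ hσπp
    have hc1 := hcong (p : R3) π hπ hNπ hπp
    have hc2 := hcong (p : R3) (σ π) hσπ hNσπ hσπp
    rw [hNσ] at hc2
    have hv1' := hv1
    simp only [Set.mem_insert_iff, Set.mem_singleton_iff] at hv1'
    have hσval : σ (J (p : R3) π) = (J (p : R3) π) ^ 2 := by
      rcases hv1' with h | h | h <;> rw [h]
      · rw [map_one, one_pow]
      · exact hσω
      · rw [map_pow, hσω]
    have hsq : (J (p : R3) π) ^ 2 ∈ ({1, ω, ω ^ 2} : Set R3) := by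
      rcases hv1' with h | h | h <;> rw [h]
      · left; rw [one_pow]
      · right; right; rfl
      · right; left
        calc (ω ^ 2) ^ 2 = ω * ω ^ 3 := by ring
        _ = ω := by rw [hω3, mul_one]
    have hσc1 : σ π ∣ (p : R3) ^ ((eNorm π - 1) / 3) - (J (p : R3) π) ^ 2 := by
      have h := map_dvd σ hc1
      rwa [map_sub, map_pow, map_intCast, hσval] at h
    have hkey : σ π ∣ J (p : R3) (σ π) - (J (p : R3) π) ^ 2 := by
      have heq : J (p : R3) (σ π) - (J (p : R3) π) ^ 2 =
          ((p : R3) ^ ((eNorm π - 1) / 3) - (J (p : R3) π) ^ 2) -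
            ((p : R3) ^ ((eNorm π - 1) / 3) - J (p : R3) (σ π)) := by ring
      rw [heq]
      exact dvd_sub hσc1 hc2
    have heq2 : J (p : R3) (σ π) = (J (p : R3) π) ^ 2 :=
      hdiff _ hv2 _ hsq (σ π) hσπ3 hkey
    have hcube : (J (p : R3) π) ^ 3 = 1 := by
      rcases hv1' with h | h | h <;> rw [h]
      · rw [one_pow]
      · exact hω3
      · linear_combination (ω ^ 3 + 1) * hω3
    exact ⟨by rw [heq2]; linear_combination hcube, hcube⟩
  -- induction over the factorization of divisors of d
  have main : ∀ n : R3, n ∣ (d : R3) → J (p : R3) n * J (p : R3) (σ n) = 1 := by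
    intro n
    induction n using UniqueFactorizationMonoid.induction_on_prime with
    | h₁ =>
      intro h
      exact absurd (by exact_mod_cast zero_dvd_iff.1 h : d = 0) hd0
    | h₂ x hx =>
      intro _
      rw [hunit _ _ hx, hunit _ _ (hx.map σ), mul_one]
    | h₃ a q ha hq ih =>
      intro hdvd
      have hq' : q ∣ (d : R3) := (dvd_mul_right q a).trans hdvd
      have ha' : a ∣ (d : R3) := (dvd_mul_left a q).trans hdvd
      rw [hmul, map_mul, hmul, mul_mul_mul_comm, (hπfacts q hq hq').1, ih ha', one_mul]
  have main3 : ∀ n : R3, n ∣ (d : R3) → (J (p : R3) n) ^ 3 = 1 := by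
    intro n
    induction n using UniqueFactorizationMonoid.induction_on_prime with
    | h₁ =>
      intro h
      exact absurd (by exact_mod_cast zero_dvd_iff.1 h : d = 0) hd0
    | h₂ x hx =>
      intro _
      rw [hunit _ _ hx, one_pow]
    | h₃ a q ih hq ihh =>
      intro hdvd
      rw [hmul, mul_pow, (hπfacts q hq ((dvd_mul_right q a).trans hdvd)).2,
        ihh ((dvd_mul_left a q).trans hdvd), one_mul]
  have h2 : J (p : R3) (d : R3) * J (p : R3) (d : R3) = 1 := by
    have h := main (d : R3) dvd_rfl
    rwa [map_intCast] at h
  have h3c := main3 (d : R3) dvd_rfl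
  linear_combination h3c - J (p : R3) (d : R3) * h2
end

section
/- Every ideal of ℤ[i] coprime to 2 has a unique generator congruent to 1 modulo (1+i)³. -/
open Zsqrtd

namespace Stmt17Aux

lemma dvd_pi3_iff (z : GaussianInt) :
    (1 + sqrtd : GaussianInt) ^ 3 ∣ z ↔ 4 ∣ (z.re + z.im) ∧ 4 ∣ (z.re - z.im) := by
  have h3 : (1 + sqrtd : GaussianInt) ^ 3 = ⟨-2, 2⟩ := by decide
  rw [h3]
  constructor
  · rintro ⟨w, hw⟩
    have h1 := congrArg Zsqrtd.re hw
    have h2 := congrArg Zsqrtd.im hw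
    simp [Zsqrtd.re_mul, Zsqrtd.im_mul] at h1 h2
    omega
  · rintro ⟨⟨k, hk⟩, ⟨l, hl⟩⟩
    refine ⟨⟨-l, -k⟩, ?_⟩
    ext <;> simp [Zsqrtd.re_mul, Zsqrtd.im_mul] <;> omega

lemma dvd_pi_iff (z : GaussianInt) :
    (1 + sqrtd : GaussianInt) ∣ z ↔ 2 ∣ (z.re + z.im) := by
  constructor
  · rintro ⟨w, hw⟩
    have h1 := congrArg Zsqrtd.re hw
    have h2 := congrArg Zsqrtd.im hw
    simp [Zsqrtd.re_mul, Zsqrtd.im_mul] at h1 h2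
    omega
  · rintro ⟨k, hk⟩
    refine ⟨⟨k, z.im - k⟩, ?_⟩
    ext <;> simp [Zsqrtd.re_mul, Zsqrtd.im_mul] <;> omega

lemma unit_cases (u : GaussianInt) (h : IsUnit u) :
    u = 1 ∨ u = -1 ∨ u = sqrtd ∨ u = -sqrtd := by
  have h1 : u.norm = 1 := (Zsqrtd.norm_eq_one_iff' (by norm_num) u).mpr h
  rw [Zsqrtd.norm_def] at h1
  have h2 : u.re * u.re + u.im * u.im = 1 := by linarith
  have h3 : -1 ≤ u.re ∧ u.re ≤ 1 := by
    constructor <;> nlinarith [mul_self_nonneg u.im, mul_self_nonneg (u.re + 1),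
      mul_self_nonneg (u.re - 1)]
  have h4 : -1 ≤ u.im ∧ u.im ≤ 1 := by
    constructor <;> nlinarith [mul_self_nonneg u.re, mul_self_nonneg (u.im + 1),
      mul_self_nonneg (u.im - 1)]
  have h5 : (u.re = 1 ∧ u.im = 0) ∨ (u.re = -1 ∧ u.im = 0) ∨
      (u.re = 0 ∧ u.im = 1) ∨ (u.re = 0 ∧ u.im = -1) := by
    obtain ⟨ha, hb⟩ := h3; obtain ⟨hc, hd⟩ := h4
    interval_cases u.re <;> interval_cases u.im <;> omega
  rcases h5 with ⟨ha, hb⟩ | ⟨ha, hb⟩ | ⟨ha, hb⟩ | ⟨ha, hb⟩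
  · left; ext <;> simp [ha, hb]
  · right; left; ext <;> simp [ha, hb]
  · right; right; left; ext <;> simp [ha, hb]
  · right; right; right; ext <;> simp [ha, hb]

lemma isUnit_sqrtd : IsUnit (sqrtd : GaussianInt) :=
  IsUnit.of_mul_eq_one (-sqrtd) (by decide)

end Stmt17Aux

open Stmt17Aux in
/-- Every ideal of `ℤ[i]` coprime to `2` has a unique generator congruent to `1`
modulo `(1+i)³`. -/
theorem stmt17 (I : Ideal GaussianInt) (hI : I ⊔ Ideal.span {(2 : GaussianInt)} = ⊤) :
    ∃! g : GaussianInt, Ideal.span {g} = I ∧ (1 + Zsqrtd.sqrtd : GaussianInt) ^ 3 ∣ (g - 1) := by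
  obtain ⟨g₀, rfl⟩ : ∃ g₀, I = Ideal.span {g₀} := ⟨_, (Ideal.span_singleton_generator I).symm⟩
  have hcop : IsCoprime g₀ (2 : GaussianInt) := by
    rw [← Ideal.isCoprime_span_singleton_iff, Ideal.isCoprime_iff_sup_eq]; exact hI
  have hπ2 : (1 + sqrtd : GaussianInt) ∣ 2 := ⟨1 - sqrtd, by decide⟩
  have hπnu : ¬ IsUnit (1 + sqrtd : GaussianInt) := by
    intro h
    have := (Zsqrtd.norm_eq_one_iff' (by norm_num) _).mpr h
    rw [Zsqrtd.norm_def] at this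
    simp at this
  have hπg : ¬ (1 + sqrtd : GaussianInt) ∣ g₀ := fun hd => hπnu (hcop.isUnit_of_dvd' hd hπ2)
  have hodd : ¬ 2 ∣ (g₀.re + g₀.im) := fun h => hπg ((dvd_pi_iff g₀).mpr h)
  have key : ∀ u : GaussianInt, IsUnit u →
      Ideal.span {u * g₀} = Ideal.span {g₀} := fun u hu =>
    Ideal.span_singleton_eq_span_singleton.mpr (associated_unit_mul_left g₀ u hu)
  have exists_u : ∃ u : GaussianInt, IsUnit u ∧ (1 + sqrtd : GaussianInt) ^ 3 ∣ (u * g₀ - 1) := by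
    have hcases : (4 ∣ (g₀.re + g₀.im - 1) ∧ 4 ∣ (g₀.re - g₀.im - 1)) ∨
        (4 ∣ (-g₀.re - g₀.im - 1) ∧ 4 ∣ (-g₀.re + g₀.im - 1)) ∨
        (4 ∣ (-g₀.im + g₀.re - 1) ∧ 4 ∣ (-g₀.im - g₀.re - 1)) ∨
        (4 ∣ (g₀.im - g₀.re - 1) ∧ 4 ∣ (g₀.im + g₀.re - 1)) := by omega
    rcases hcases with ⟨h1, h2⟩ | ⟨h1, h2⟩ | ⟨h1, h2⟩ | ⟨h1, h2⟩
    · refine ⟨1, isUnit_one, (dvd_pi3_iff _).mpr ?_⟩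
      simp only [Zsqrtd.re_sub, Zsqrtd.im_sub, Zsqrtd.re_mul, Zsqrtd.im_mul,
        Zsqrtd.re_one, Zsqrtd.im_one, Zsqrtd.re_neg, Zsqrtd.im_neg, Zsqrtd.re_sqrtd, Zsqrtd.im_sqrtd]
      constructor <;> omega
    · refine ⟨-1, isUnit_one.neg, (dvd_pi3_iff _).mpr ?_⟩
      simp only [Zsqrtd.re_sub, Zsqrtd.im_sub, Zsqrtd.re_mul, Zsqrtd.im_mul,
        Zsqrtd.re_one, Zsqrtd.im_one, Zsqrtd.re_neg, Zsqrtd.im_neg, Zsqrtd.re_sqrtd, Zsqrtd.im_sqrtd]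
      constructor <;> omega
    · refine ⟨sqrtd, isUnit_sqrtd, (dvd_pi3_iff _).mpr ?_⟩
      simp only [Zsqrtd.re_sub, Zsqrtd.im_sub, Zsqrtd.re_mul, Zsqrtd.im_mul,
        Zsqrtd.re_one, Zsqrtd.im_one, Zsqrtd.re_sqrtd, Zsqrtd.im_sqrtd]
      constructor <;> omega
    · refine ⟨-sqrtd, isUnit_sqrtd.neg, (dvd_pi3_iff _).mpr ?_⟩
      simp only [Zsqrtd.re_sub, Zsqrtd.im_sub, Zsqrtd.re_mul, Zsqrtd.im_mul,
        Zsqrtd.re_one, Zsqrtd.im_one, Zsqrtd.re_neg, Zsqrtd.im_neg, Zsqrtd.re_sqrtd, Zsqrtd.im_sqrtd]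
      constructor <;> omega
  obtain ⟨u, hu, hdvd⟩ := exists_u
  refine ⟨u * g₀, ⟨key u hu, hdvd⟩, ?_⟩
  rintro g' ⟨hspan, hdvd'⟩
  have hassoc : Associated g' (u * g₀) :=
    Ideal.span_singleton_eq_span_singleton.mp (hspan.trans (key u hu).symm)
  obtain ⟨v, hv⟩ := hassoc
  have hdiff : (1 + sqrtd : GaussianInt) ^ 3 ∣ g' * ((v : GaussianInt) - 1) := by
    have heq : g' * ((v : GaussianInt) - 1) = (u * g₀ - 1) - (g' - 1) := by
      rw [← hv]; ring
    rw [heq]; exact dvd_sub hdvd hdvd'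
  have hπg' : ¬ (1 + sqrtd : GaussianInt) ∣ g' := by
    intro hd
    have h2 : (1 + sqrtd : GaussianInt) ∣ u * g₀ := hv ▸ hd.mul_right _
    exact hπg (hu.dvd_mul_left.mp h2)
  have hπne : (1 + sqrtd : GaussianInt) ≠ 0 := by decide
  have hπ2ne : (1 + sqrtd : GaussianInt) ^ 2 ≠ 0 := pow_ne_zero 2 hπne
  rcases unit_cases (v : GaussianInt) v.isUnit with h1 | h1 | h1 | h1
  · rw [← hv, h1, mul_one]
  all_goals exfalso
  · -- v = -1
    rw [h1] at hdiff
    have heq : g' * ((-1 : GaussianInt) - 1) =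
        (1 + sqrtd) ^ 2 * (1 + sqrtd) ^ 0 * (sqrtd * g') := by
      have : ((-1 : GaussianInt) - 1) = (1 + sqrtd) ^ 2 * sqrtd := by decide
      rw [this]; ring
    rw [heq] at hdiff
    have h3 : (1 + sqrtd : GaussianInt) ^ 2 * (1 + sqrtd) ∣
        (1 + sqrtd) ^ 2 * ((1 + sqrtd) ^ 0 * (sqrtd * g')) := by
      rw [← mul_assoc, ← pow_succ]; simpa using hdiff
    have h4 := (mul_dvd_mul_iff_left hπ2ne).mp h3
    simp only [pow_zero, one_mul] at h4
    exact hπg' (isUnit_sqrtd.dvd_mul_left.mp h4)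
  · -- v = sqrtd
    rw [h1] at hdiff
    have heq : g' * ((sqrtd : GaussianInt) - 1) = (1 + sqrtd) * (sqrtd * g') := by
      have : ((sqrtd : GaussianInt) - 1) = (1 + sqrtd) * sqrtd := by decide
      rw [this]; ring
    rw [heq] at hdiff
    have h3 : (1 + sqrtd : GaussianInt) * (1 + sqrtd) ^ 2 ∣
        (1 + sqrtd) * (sqrtd * g') := by
      rw [← pow_succ']; simpa using hdiff
    have h4 := (mul_dvd_mul_iff_left hπne).mp h3
    have h5 : (1 + sqrtd : GaussianInt) ∣ sqrtd * g' := dvd_trans (dvd_pow_self _ two_ne_zero) h4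
    exact hπg' (isUnit_sqrtd.dvd_mul_left.mp h5)
  · -- v = -sqrtd
    rw [h1] at hdiff
    have heq : g' * ((-sqrtd : GaussianInt) - 1) = (1 + sqrtd) * (-g') := by ring
    rw [heq] at hdiff
    have h3 : (1 + sqrtd : GaussianInt) * (1 + sqrtd) ^ 2 ∣
        (1 + sqrtd) * (-g') := by
      rw [← pow_succ']; simpa using hdiff
    have h4 := (mul_dvd_mul_iff_left hπne).mp h3
    have h5 : (1 + sqrtd : GaussianInt) ∣ -g' := dvd_trans (dvd_pow_self _ two_ne_zero) h4
    exact hπg' (dvd_neg.mp h5)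
end
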